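/- arXiv:2307.14101 — 3 statements merged into one kernel-verified Lean document; each statement's English description precedes it below -/
import Mathlib

section
/- If f is L-smooth (‖∇f(y) − ∇f(x)‖ ≤ L‖y−x‖) and ‖∇̃f(x) − ∇f(x)‖ ≤ α‖∇f(x)‖ with α ∈ [0,1), then for all x, y: f(y) ≤ f(x) + ⟨∇̃f(x), y−x⟩ + (L/2)‖y−x‖² + (α/(1−α))‖∇̃f(x)‖·‖y−x‖. -/
open scoped RealInnerProductSpace

lemma descent_aux {n : ℕ} (f : EuclideanSpace ℝ (Fin n) → ℝ)
    (hf : Differentiable ℝ f)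
    (L : ℝ) (hL : 0 ≤ L)
    (hsmooth : ∀ x y, ‖gradient f y - gradient f x‖ ≤ L * ‖y - x‖)
    (x y : EuclideanSpace ℝ (Fin n)) :
    f y ≤ f x + ⟪gradient f x, y - x⟫ + (L / 2) * ‖y - x‖ ^ 2 := by
  set v := y - x with hv
  set g : ℝ → ℝ := fun t =>
    f (x + t • v) - t * ⟪gradient f x, v⟫ - (L / 2) * t ^ 2 * ‖v‖ ^ 2 with hg
  have hderiv : ∀ t : ℝ, HasDerivAt g
      (⟪gradient f (x + t • v), v⟫ - ⟪gradient f x, v⟫ - L * t * ‖v‖ ^ 2) t := by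
    intro t
    have hc : HasDerivAt (fun t : ℝ => x + t • v) v t := by
      simpa using ((hasDerivAt_id t).smul_const v).const_add x
    have h1 : HasDerivAt (fun t : ℝ => f (x + t • v))
        (⟪gradient f (x + t • v), v⟫) t := by
      have := ((hf (x + t • v)).hasGradientAt.hasFDerivAt).comp_hasDerivAt t hc
      simp only [InnerProductSpace.toDual_apply_apply, Function.comp_def] at this
      exact this
    have h2 : HasDerivAt (fun t : ℝ => t * ⟪gradient f x, v⟫)
        (⟪gradient f x, v⟫) t := by
      simpa using (hasDerivAt_id t).mul_const (⟪gradient f x, v⟫)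
    have h3 : HasDerivAt (fun t : ℝ => (L / 2) * t ^ 2 * ‖v‖ ^ 2)
        (L * t * ‖v‖ ^ 2) t := by
      have : HasDerivAt (fun t : ℝ => t ^ 2) (2 * t) t := by
        simpa using hasDerivAt_pow 2 t
      have := ((this.const_mul (L / 2)).mul_const (‖v‖ ^ 2))
      exact this.congr_deriv (by ring)
    exact (h1.sub h2).sub h3
  have hmono : AntitoneOn g (Set.Icc 0 1) := by
    apply antitoneOn_of_deriv_nonpos (convex_Icc 0 1)
    · exact (Continuous.continuousOn (by
        have := hf.continuous; fun_prop)).sub (by fun_prop) |>.sub (by fun_prop) |>.congr (fun t _ => rfl)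
    · intro t ht
      exact ((hderiv t).differentiableAt).differentiableWithinAt
    · intro t ht
      rw [interior_Icc] at ht
      rw [(hderiv t).deriv]
      have h1 : ⟪gradient f (x + t • v) - gradient f x, v⟫ ≤
          ‖gradient f (x + t • v) - gradient f x‖ * ‖v‖ := real_inner_le_norm _ _
      have h2 : ‖gradient f (x + t • v) - gradient f x‖ ≤ L * (t * ‖v‖) := by
        have := hsmooth x (x + t • v)
        simpa [norm_smul, abs_of_nonneg ht.1.le, mul_assoc] using this
      have h3 : ⟪gradient f (x + t • v) - gradient f x, v⟫ =
          ⟪gradient f (x + t • v), v⟫ - ⟪gradient f x, v⟫ := by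
        rw [inner_sub_left]
      nlinarith [norm_nonneg v, h1, h2]
  have := hmono (Set.left_mem_Icc.2 zero_le_one) (Set.right_mem_Icc.2 zero_le_one)
    zero_le_one
  simp only [hg, zero_smul, add_zero, zero_mul, one_smul, one_mul, zero_pow, one_pow,
    mul_zero, sub_zero, mul_one] at this
  have hxy : x + v = y := by rw [hv]; abel
  rw [hxy] at this
  linarith

/-- Descent-type inequality with inexact gradient for L-smooth f. -/
theorem stmt2 {n : ℕ} (f : EuclideanSpace ℝ (Fin n) → ℝ)
    (hf : Differentiable ℝ f)
    (L : ℝ) (hL : 0 < L)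
    (hsmooth : ∀ x y, ‖gradient f y - gradient f x‖ ≤ L * ‖y - x‖)
    (α : ℝ) (hα0 : 0 ≤ α) (hα1 : α < 1)
    (tg : EuclideanSpace ℝ (Fin n) → EuclideanSpace ℝ (Fin n))
    (herr : ∀ x, ‖tg x - gradient f x‖ ≤ α * ‖gradient f x‖) :
    ∀ x y, f y ≤ f x + ⟪tg x, y - x⟫ + (L / 2) * ‖y - x‖ ^ 2
      + (α / (1 - α)) * ‖tg x‖ * ‖y - x‖ := by
  intro x y
  have hd := descent_aux f hf L hL.le hsmooth x y
  have h1 : ⟪gradient f x, y - x⟫ = ⟪tg x, y - x⟫ + ⟪gradient f x - tg x, y - x⟫ := by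
    rw [inner_sub_left]; ring
  have h2 : ⟪gradient f x - tg x, y - x⟫ ≤ α * ‖gradient f x‖ * ‖y - x‖ := by
    calc ⟪gradient f x - tg x, y - x⟫ ≤ ‖gradient f x - tg x‖ * ‖y - x‖ :=
          real_inner_le_norm _ _
      _ ≤ α * ‖gradient f x‖ * ‖y - x‖ := by
          have := herr x
          rw [norm_sub_rev] at this
          exact mul_le_mul_of_nonneg_right this (norm_nonneg _)
  have h3 : ‖gradient f x‖ ≤ ‖tg x‖ / (1 - α) := by
    have h4 : ‖gradient f x‖ ≤ ‖gradient f x - tg x‖ + ‖tg x‖ := by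
      simpa using norm_add_le (gradient f x - tg x) (tg x)
    have h5 := herr x
    rw [norm_sub_rev] at h5
    rw [le_div_iff₀ (by linarith)]
    nlinarith
  have h6 : α * ‖gradient f x‖ * ‖y - x‖ ≤ (α / (1 - α)) * ‖tg x‖ * ‖y - x‖ := by
    have : α * ‖gradient f x‖ ≤ α / (1 - α) * ‖tg x‖ := by
      rw [div_mul_eq_mul_div, le_div_iff₀ (by linarith : (0:ℝ) < 1 - α)] at *
      nlinarith [h3, norm_nonneg (tg x)]
    exact mul_le_mul_of_nonneg_right this (norm_nonneg _)
  linarith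
end

section
/- Define sequences with L_0 ≤ L, β_0 ≥ β := 0.5 − α > 0, where at each iteration L is at most doubled from max{L_k/2, L_min} and β is at most halved from min{2β_k, β_max}, with updates terminating once L_{k+1} ≥ L and β_{k+1} ≤ β. Then for all k < N: L_{k+1} ≤ 2L·max{1, β_max/(0.5β)} and β_{k+1} ≥ β / max{2, 2L/L_min}. -/
set_option maxHeartbeats 1000000


/-- Bounds on the adaptive parameters of Algorithm 2: with L_0 ≤ L, β_0 ≥ β,
doubling of L (from max{L_k/2, L_min}) and halving of β (from min{2β_k, β_max})
terminating once L_{k+1} ≥ L and β_{k+1} ≤ β, one has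
L_{k+1} ≤ 2L·max{1, β_max/(0.5β)} and β_{k+1} ≥ β / max{2, 2L/L_min}. -/
theorem stmt15 (L Lmin α αmin : ℝ)
    (hLmin : 0 < Lmin) (hL : Lmin ≤ L)
    (hα0 : 0 ≤ α) (hα1 : α < 1 / 2) (hαmin0 : 0 ≤ αmin) (hαmin : αmin ≤ α)
    (Lk βk : ℕ → ℝ)
    (hL0 : Lk 0 ≤ L) (hβ0 : (1 / 2 - α) ≤ βk 0) (hβ0' : βk 0 ≤ 1 / 2 - αmin)
    (hstep : ∀ k, ∃ m : ℕ,
      Lk (k + 1) = 2 ^ m * max (Lk k / 2) Lmin ∧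
      βk (k + 1) = min (2 * βk k) (1 / 2 - αmin) / 2 ^ m ∧
      (m = 0 ∨ Lk (k + 1) / 2 < L ∨ (1 / 2 - α) < 2 * βk (k + 1)))
    (N : ℕ) :
    ∀ k < N, Lk (k + 1) ≤ 2 * L * max 1 ((1 / 2 - αmin) / ((1 / 2) * (1 / 2 - α)))
      ∧ (1 / 2 - α) / max 2 (2 * L / Lmin) ≤ βk (k + 1) := by
  set b : ℝ := 1 / 2 - α with hb
  set bm : ℝ := 1 / 2 - αmin with hbm
  set M : ℝ := max 1 (bm / (1 / 2 * b)) with hM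
  set D : ℝ := max 2 (2 * L / Lmin) with hD
  clear_value b bm M D
  have hbpos : 0 < b := by rw [hb]; linarith
  have hbmb : b ≤ bm := by rw [hb, hbm]; linarith
  have hbmpos : 0 < bm := lt_of_lt_of_le hbpos hbmb
  have hLpos : 0 < Lmin := hLmin
  have hLpos' : 0 < L := lt_of_lt_of_le hLmin hL
  have hM1 : (1:ℝ) ≤ M := by rw [hM]; exact le_max_left _ _
  have hM2 : bm / (1 / 2 * b) ≤ M := by rw [hM]; exact le_max_right _ _
  have hD2 : (2:ℝ) ≤ D := by rw [hD]; exact le_max_left _ _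
  have hD2' : 2 * L / Lmin ≤ D := by rw [hD]; exact le_max_right _ _
  have hDpos : (0:ℝ) < D := lt_of_lt_of_le two_pos hD2
  -- generic step lemma
  have step : ∀ n : ℕ, 0 < βk n → βk n ≤ bm → Lk n * βk n ≤ 2 * L * bm →
      Lk n ≤ 2 * L * M → b / D ≤ βk n →
      Lmin * b ≤ max (Lk n / 2) Lmin * min (2 * βk n) bm →
      Lmin ≤ Lk (n+1) ∧ 0 < βk (n+1) ∧ βk (n+1) ≤ bm ∧
      Lmin * b ≤ Lk (n+1) * βk (n+1) ∧ Lk (n+1) * βk (n+1) ≤ 2 * L * bm ∧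
      Lk (n+1) ≤ 2 * L * M ∧ b / D ≤ βk (n+1) := by
    intro n h1 h2 h3 h4 h5 h6
    obtain ⟨m, hLe, hβe, hdisj⟩ := hstep n
    set A : ℝ := max (Lk n / 2) Lmin with hA
    set B : ℝ := min (2 * βk n) bm with hB
    clear_value A B
    have hALmin : Lmin ≤ A := by rw [hA]; exact le_max_right _ _
    have hApos : 0 < A := lt_of_lt_of_le hLmin hALmin
    have hBbm : B ≤ bm := by rw [hB]; exact min_le_right _ _
    have hBpos : 0 < B := by rw [hB]; exact lt_min (by linarith) hbmpos
    have hpm : (1:ℝ) ≤ 2 ^ m := one_le_pow₀ one_le_two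
    have hpmpos : (0:ℝ) < 2 ^ m := by positivity
    have hprod : Lk (n+1) * βk (n+1) = A * B := by
      rw [hLe, hβe]; field_simp
    have c1 : Lmin ≤ Lk (n+1) := by
      rw [hLe]
      linarith [mul_le_mul_of_nonneg_right hpm hApos.le, hALmin]
    have c2 : 0 < βk (n+1) := by
      rw [hβe]; exact div_pos hBpos hpmpos
    have c3 : βk (n+1) ≤ bm := by
      rw [hβe]
      calc B / 2 ^ m ≤ B := div_le_self hBpos.le hpm
        _ ≤ bm := hBbm
    have c4 : Lmin * b ≤ Lk (n+1) * βk (n+1) := by rw [hprod]; exact h6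
    have c5AB : A * B ≤ 2 * L * bm := by
      rcases max_cases (Lk n / 2) Lmin with ⟨hAeq, hge⟩ | ⟨hAeq, hlt⟩
      · rw [hA, hAeq]
        have hB2 : B ≤ 2 * βk n := hB.le.trans (min_le_left _ _)
        linarith [mul_le_mul_of_nonneg_left hB2 (by linarith : (0:ℝ) ≤ Lk n / 2), h3]
      · rw [hA, hAeq]
        linarith [mul_le_mul_of_nonneg_left hBbm hLmin.le,
          mul_le_mul_of_nonneg_right hL hbmpos.le, mul_pos hLpos' hbmpos]
    have c5 : Lk (n+1) * βk (n+1) ≤ 2 * L * bm := by rw [hprod]; exact c5AB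
    have c67 : Lk (n+1) ≤ 2 * L * M ∧ b / D ≤ βk (n+1) := by
      rcases hdisj with hm | hcond | hcond
      · subst hm
        have hL1 : Lk (n+1) = A := by rw [hLe]; norm_num
        have hβ1 : βk (n+1) = B := by rw [hβe]; norm_num
        constructor
        · rw [hL1, hA]
          apply max_le
          · linarith [mul_nonneg hLpos'.le (by linarith : (0:ℝ) ≤ M - 1), h4]
          · linarith [mul_nonneg hLpos'.le (by linarith : (0:ℝ) ≤ M - 1)]
        · rw [hβ1, hB]
          apply le_min
          · linarith
          · have : b / D ≤ b := div_le_self hbpos.le (by linarith)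
            linarith
      · -- L-exit
        have h2L : Lk (n+1) ≤ 2 * L := by linarith
        have hLk1pos : 0 < Lk (n+1) := lt_of_lt_of_le hLmin c1
        constructor
        · linarith [mul_nonneg hLpos'.le (by linarith : (0:ℝ) ≤ M - 1)]
        · have hβform : βk (n+1) = A * B / Lk (n+1) := by
            rw [eq_div_iff hLk1pos.ne', mul_comm]; exact hprod
          have key1 : Lmin * b / (2 * L) ≤ A * B / Lk (n+1) :=
            div_le_div₀ (mul_pos hApos hBpos).le h6 hLk1pos h2L
          have key2 : b / D ≤ Lmin * b / (2 * L) := by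
            rw [div_le_div_iff₀ hDpos (by linarith : (0:ℝ) < 2 * L)]
            have hld : 2 * L ≤ Lmin * D := by
              rw [div_le_iff₀ hLmin] at hD2'
              linarith
            linarith [mul_le_mul_of_nonneg_left hld hbpos.le]
          rw [hβform]
          linarith
      · -- β-exit
        have c2' : 0 < βk (n+1) := c2
        constructor
        · have hLform : Lk (n+1) = A * B / βk (n+1) := by
            rw [eq_div_iff c2'.ne', ← hprod]
          have k1 : A * B / βk (n+1) ≤ (2 * L * bm) / (b / 2) :=
            div_le_div₀ (mul_pos (mul_pos two_pos hLpos') hbmpos).le c5AB (by linarith) (by linarith)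
          have k2 : (2 * L * bm) / (b / 2) ≤ 2 * L * M := by
            have heq : (2 * L * bm) / (b / 2) = 2 * L * (bm / (1 / 2 * b)) := by
              field_simp
            rw [heq]
            have := mul_le_mul_of_nonneg_left hM2 (by linarith : (0:ℝ) ≤ 2 * L)
            linarith
          rw [hLform]
          linarith
        · rw [div_le_iff₀ hDpos]
          linarith [mul_nonneg c2.le (by linarith : (0:ℝ) ≤ D - 2)]
    exact ⟨c1, c2, c3, c4, c5, c67.1, c67.2⟩
  have key : ∀ n : ℕ, Lmin ≤ Lk (n+1) ∧ 0 < βk (n+1) ∧ βk (n+1) ≤ bm ∧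
      Lmin * b ≤ Lk (n+1) * βk (n+1) ∧ Lk (n+1) * βk (n+1) ≤ 2 * L * bm ∧
      Lk (n+1) ≤ 2 * L * M ∧ b / D ≤ βk (n+1) := by
    intro n
    induction n with
    | zero =>
        apply step 0 (by linarith) hβ0'
        · linarith [mul_le_mul_of_nonneg_right hL0 (by linarith : (0:ℝ) ≤ βk 0),
            mul_le_mul_of_nonneg_left hβ0' hLpos'.le, mul_pos hLpos' hbmpos]
        · linarith [mul_nonneg hLpos'.le (by linarith : (0:ℝ) ≤ M - 1)]
        · have : b / D ≤ b := div_le_self hbpos.le (by linarith)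
          linarith
        · exact mul_le_mul (le_max_right _ _) (le_min (by linarith) hbmb) hbpos.le
            (le_trans hLmin.le (le_max_right _ _))
    | succ n ih =>
        obtain ⟨i1, i2, i3, i4, i5, i6, i7⟩ := ih
        apply step (n+1) i2 i3 i5 i6 i7
        rcases le_total (2 * βk (n+1)) bm with hle | hle
        · rw [min_eq_left hle]
          linarith [mul_nonneg (sub_nonneg.2 (le_max_left (Lk (n+1) / 2) Lmin)) i2.le, i4]
        · rw [min_eq_right hle]
          exact mul_le_mul (le_max_right _ _) hbmb hbpos.le
            (le_trans hLmin.le (le_max_right _ _))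
  intro k hk
  exact ⟨(key k).2.2.2.2.2.1, (key k).2.2.2.2.2.2⟩
end

section
/- In the adaptive Algorithm 2, the total number of executions of the inner step (step 4) over N outer iterations is at most 2N + log₂(2·max{L/L_min, (0.5−α_min)/(0.5−α)}). -/
/-- Auxiliary: if `2^(n-1) * (x/2) ≤ z` with `0 < x`, `1 ≤ n`, then
`n ≤ 2 + logb 2 z - logb 2 x`. -/
lemma stmt18_aux (n : ℕ) (hn : 1 ≤ n) (x z : ℝ) (hx : 0 < x)
    (hz : (2:ℝ) ^ (n - 1) * (x / 2) ≤ z) :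
    (n : ℝ) ≤ 2 + Real.logb 2 z - Real.logb 2 x := by
  have h0 : (0:ℝ) < 2 ^ (n - 1) * (x / 2) := by positivity
  have h1 : Real.logb 2 ((2:ℝ) ^ (n - 1) * (x / 2)) ≤ Real.logb 2 z :=
    Real.logb_le_logb_of_le (by norm_num) h0 hz
  have h2 : Real.logb 2 ((2:ℝ) ^ (n - 1) * (x / 2))
      = (n - 1 : ℕ) + (Real.logb 2 x - 1) := by
    rw [Real.logb_mul (by positivity) (by positivity), Real.logb_pow,
      Real.logb_div (ne_of_gt hx) (by norm_num),
      Real.logb_self_eq_one (by norm_num : (1:ℝ) < 2)]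
    ring
  have h3 : ((n - 1 : ℕ) : ℝ) = (n : ℝ) - 1 := by
    rw [Nat.cast_sub hn]; norm_num
  rw [h2, h3] at h1
  linarith

/-- Bound on the total number of inner-step (step 4) executions of Algorithm 2:
at most 2N + log₂(2·max{L/L_min, (0.5−α_min)/(0.5−α)}). -/
theorem stmt18 (L Lmin α αmin : ℝ)
    (hLmin : 0 < Lmin) (hL : Lmin ≤ L)
    (hα0 : 0 ≤ α) (hα1 : α < 1 / 2) (hαmin0 : 0 ≤ αmin) (hαmin : αmin ≤ α)
    (Lk βk : ℕ → ℝ) (m : ℕ → ℕ)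
    (hm : ∀ k, 1 ≤ m k)
    (hL0 : Lmin ≤ Lk 0) (hL0' : Lk 0 ≤ L)
    (hβ0 : (1 / 2 - α) ≤ βk 0) (hβ0' : βk 0 ≤ 1 / 2 - αmin)
    (hstep : ∀ k,
      Lk (k + 1) = 2 ^ (m k - 1) * max (Lk k / 2) Lmin ∧
      βk (k + 1) = min (2 * βk k) (1 / 2 - αmin) / 2 ^ (m k - 1) ∧
      (m k = 1 ∨ Lk (k + 1) / 2 < L ∨ (1 / 2 - α) < 2 * βk (k + 1)))
    (N : ℕ) :
    (∑ k ∈ Finset.range N, (m k : ℝ))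
      ≤ 2 * N + Real.logb 2 (2 * max (L / Lmin) ((1 / 2 - αmin) / (1 / 2 - α))) := by
  have hb : (0:ℝ) < 1 / 2 - α := by linarith
  have hC : (0:ℝ) < 1 / 2 - αmin := by linarith
  have hbC : (1:ℝ) / 2 - α ≤ 1 / 2 - αmin := by linarith
  have hLpos : 0 < L := lt_of_lt_of_le hLmin hL
  -- invariants
  have inv : ∀ k, 0 < βk k ∧ βk k ≤ 1 / 2 - αmin ∧ Lmin ≤ Lk k ∧
      (Lk k ≤ 2 * L ∨ (1 / 2 - α) / 2 ≤ βk k) := by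
    intro k
    induction k with
    | zero => exact ⟨by linarith, hβ0', hL0, Or.inl (by linarith)⟩
    | succ k ih =>
      obtain ⟨hβpos, hβC, hLlow, hdisj⟩ := ih
      obtain ⟨eL, eβ, hexit⟩ := hstep k
      have hpow1 : (1:ℝ) ≤ 2 ^ (m k - 1) := one_le_pow₀ (by norm_num)
      have hpowpos : (0:ℝ) < 2 ^ (m k - 1) := by positivity
      have hminpos : 0 < min (2 * βk k) (1 / 2 - αmin) := lt_min (by linarith) hC
      have hβ1 : 0 < βk (k + 1) := by rw [eβ]; positivity
      have hβ2 : βk (k + 1) ≤ 1 / 2 - αmin := by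
        rw [eβ]
        calc min (2 * βk k) (1 / 2 - αmin) / 2 ^ (m k - 1)
            ≤ min (2 * βk k) (1 / 2 - αmin) := div_le_self (le_of_lt hminpos) hpow1
          _ ≤ 1 / 2 - αmin := min_le_right _ _
      have hL1 : Lmin ≤ Lk (k + 1) := by
        rw [eL]
        calc Lmin ≤ max (Lk k / 2) Lmin := le_max_right _ _
          _ ≤ 2 ^ (m k - 1) * max (Lk k / 2) Lmin :=
            le_mul_of_one_le_left (le_trans (le_of_lt hLmin) (le_max_right _ _)) hpow1
      refine ⟨hβ1, hβ2, hL1, ?_⟩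
      rcases hexit with h1 | h2 | h3
      · -- m k = 1
        rw [h1] at eL eβ
        simp only [Nat.sub_self, pow_zero, one_mul, div_one] at eL eβ
        rcases hdisj with hd | hd
        · left
          rw [eL]
          exact max_le (by linarith) (by linarith)
        · right
          rw [eβ]
          exact le_min (by linarith) (by linarith)
      · left; linarith
      · right; linarith
  -- the two per-step inequalities
  have hp : ∀ k, (m k : ℝ) ≤ 2 + Real.logb 2 (Lk (k + 1)) - Real.logb 2 (Lk k) := by
    intro k
    obtain ⟨_, _, hLlow, _⟩ := inv k
    obtain ⟨eL, _, _⟩ := hstep k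
    refine stmt18_aux (m k) (hm k) (Lk k) (Lk (k + 1)) (by linarith) ?_
    rw [eL]
    exact mul_le_mul_of_nonneg_left (le_max_left _ _) (by positivity)
  have hq : ∀ k, (m k : ℝ) ≤ 2 + Real.logb 2 (1 / βk (k + 1)) - Real.logb 2 (1 / βk k) := by
    intro k
    obtain ⟨hβpos, _, _, _⟩ := inv k
    obtain ⟨hβpos', _, _, _⟩ := inv (k + 1)
    obtain ⟨_, eβ, _⟩ := hstep k
    refine stmt18_aux (m k) (hm k) (1 / βk k) (1 / βk (k + 1)) (by positivity) ?_
    have hpowpos : (0:ℝ) < 2 ^ (m k - 1) := by positivity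
    have h1 : βk (k + 1) ≤ 2 * βk k / 2 ^ (m k - 1) := by
      rw [eβ]
      exact div_le_div_of_nonneg_right (min_le_left _ _) hpowpos.le
    have h2 : 0 < 2 * βk k / 2 ^ (m k - 1) := by positivity
    have h3 : 1 / (2 * βk k / 2 ^ (m k - 1)) ≤ 1 / βk (k + 1) :=
      one_div_le_one_div_of_le hβpos' h1
    have h4 : 1 / (2 * βk k / 2 ^ (m k - 1)) = 2 ^ (m k - 1) * (1 / βk k / 2) := by
      field_simp
    linarith
  -- common facts about the RHS
  set M : ℝ := max (L / Lmin) ((1 / 2 - αmin) / (1 / 2 - α)) with hM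
  have hM1 : (1:ℝ) ≤ M := le_trans ((one_le_div hLmin).mpr hL) (le_max_left _ _)
  -- telescoping machinery
  have tele : ∀ f : ℕ → ℝ, (∀ k, (m k : ℝ) ≤ 2 + f (k + 1) - f k) →
      (∑ k ∈ Finset.range N, (m k : ℝ)) ≤ 2 * N + (f N - f 0) := by
    intro f hf
    calc (∑ k ∈ Finset.range N, (m k : ℝ))
        ≤ ∑ k ∈ Finset.range N, (2 + (f (k + 1) - f k)) := by
          apply Finset.sum_le_sum
          intro k _
          have := hf k
          linarith
      _ = 2 * N + (f N - f 0) := by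
          rw [Finset.sum_add_distrib, Finset.sum_const, Finset.card_range,
            Finset.sum_range_sub]
          push_cast
          ring
  obtain ⟨hβN, hβNC, hLNlow, hdisjN⟩ := inv N
  rcases hdisjN with hcase | hcase
  · -- use the L-potential
    have := tele (fun k => Real.logb 2 (Lk k)) hp
    have hbound : Real.logb 2 (Lk N) - Real.logb 2 (Lk 0) ≤ Real.logb 2 (2 * M) := by
      have hL0pos : 0 < Lk 0 := lt_of_lt_of_le hLmin hL0
      have hLNpos : 0 < Lk N := lt_of_lt_of_le hLmin hLNlow
      have h1 : Real.logb 2 (Lk N) ≤ Real.logb 2 (2 * L) :=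
        Real.logb_le_logb_of_le (by norm_num) hLNpos hcase
      have h2 : Real.logb 2 Lmin ≤ Real.logb 2 (Lk 0) :=
        Real.logb_le_logb_of_le (by norm_num) hLmin hL0
      have h3 : Real.logb 2 (2 * L) - Real.logb 2 Lmin = Real.logb 2 (2 * L / Lmin) := by
        rw [Real.logb_div (by positivity) (ne_of_gt hLmin)]
      have h4 : Real.logb 2 (2 * L / Lmin) ≤ Real.logb 2 (2 * M) := by
        apply Real.logb_le_logb_of_le (by norm_num) (by positivity)
        have : L / Lmin ≤ M := le_max_left _ _
        calc 2 * L / Lmin = 2 * (L / Lmin) := by ring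
          _ ≤ 2 * M := by linarith
      linarith
    linarith
  · -- use the β-potential
    have := tele (fun k => Real.logb 2 (1 / βk k)) hq
    have hβ0pos : 0 < βk 0 := by linarith
    have hbound : Real.logb 2 (1 / βk N) - Real.logb 2 (1 / βk 0)
        ≤ Real.logb 2 (2 * M) := by
      have h1 : Real.logb 2 (1 / βk N) ≤ Real.logb 2 (1 / ((1 / 2 - α) / 2)) := by
        apply Real.logb_le_logb_of_le (by norm_num) (by positivity)
        exact one_div_le_one_div_of_le (by linarith) hcase
      have h2 : Real.logb 2 (1 / (1 / 2 - αmin)) ≤ Real.logb 2 (1 / βk 0) := by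
        apply Real.logb_le_logb_of_le (by norm_num) (by positivity)
        exact one_div_le_one_div_of_le hβ0pos hβ0'
      have h3 : Real.logb 2 (1 / ((1 / 2 - α) / 2)) - Real.logb 2 (1 / (1 / 2 - αmin))
          = Real.logb 2 (2 * ((1 / 2 - αmin) / (1 / 2 - α))) := by
        rw [← Real.logb_div (by positivity) (by positivity)]
        congr 1
        rw [one_div_div, one_div (1 / 2 - αmin)]
        rw [div_eq_mul_inv, inv_inv]
        ring
      have h4 : Real.logb 2 (2 * ((1 / 2 - αmin) / (1 / 2 - α)))
          ≤ Real.logb 2 (2 * M) := by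
        apply Real.logb_le_logb_of_le (by norm_num) (by positivity)
        have : (1 / 2 - αmin) / (1 / 2 - α) ≤ M := le_max_right _ _
        linarith
      linarith
    linarith
end
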